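/- Assume r is nonconstant. Then for every point p ∈ ℝ² with p ≠ (0,0), the set {t ∈ Ω : P(t) = p} is finite. In other words, no point of the curve other than possibly the origin is traced for infinitely many parameter values; a single point cannot be crossed by infinitely many branches of the curve. -/
import Mathlib


/-- The domain Ω = {t : B(t) ≠ 0 and D(t) ≠ 0}. -/
def polarDomain (B D : Polynomial ℝ) : Set ℝ :=
  {t : ℝ | B.eval t ≠ 0 ∧ D.eval t ≠ 0}

/-- The rational function defined by a pair of polynomials, e.g. r(t) = A(t)/B(t). -/
noncomputable def ratFun (A B : Polynomial ℝ) (t : ℝ) : ℝ :=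
  A.eval t / B.eval t

/-- The curve in Cartesian coordinates: P(t) = (r(t)·cos(θ(t)), r(t)·sin(θ(t))). -/
noncomputable def polarCurve (A B C D : Polynomial ℝ) (t : ℝ) : ℝ × ℝ :=
  (ratFun A B t * Real.cos (ratFun C D t), ratFun A B t * Real.sin (ratFun C D t))

/- STATEMENT 14: if r is nonconstant, then every point p ≠ (0,0) of the plane is traced
by the curve for at most finitely many parameter values t ∈ Ω. -/
theorem finite_fibers_away_from_origin
    (A B C D : Polynomial ℝ) (hB : B ≠ 0) (hD : D ≠ 0)
    (hAB : IsCoprime A B) (hCD : IsCoprime C D)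
    (hr : ¬ (A.natDegree = 0 ∧ B.natDegree = 0)) :
    ∀ p : ℝ × ℝ, p ≠ (0, 0) →
      {t ∈ polarDomain B D | polarCurve A B C D t = p}.Finite := by
  intro p hp
  set c : ℝ := p.1 ^ 2 + p.2 ^ 2 with hc
  have hc0 : c ≠ 0 := by
    intro h
    apply hp
    have h1 : p.1 = 0 ∧ p.2 = 0 := by
      constructor <;> nlinarith [sq_nonneg p.1, sq_nonneg p.2]
    exact Prod.ext h1.1 h1.2
  set Q : Polynomial ℝ := A ^ 2 - Polynomial.C c * B ^ 2 with hQdef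
  have hQ : Q ≠ 0 := by
    intro h
    have heq : A ^ 2 = Polynomial.C c * B ^ 2 := by
      have := sub_eq_zero.mp h
      linear_combination this
    have hdvd : B ^ 2 ∣ A ^ 2 := ⟨Polynomial.C c, by rw [heq, mul_comm]⟩
    have hcop : IsCoprime (A ^ 2) (B ^ 2) := hAB.pow
    have hu2 : IsUnit (B ^ 2) := hcop.isUnit_of_dvd' hdvd dvd_rfl
    have huB : IsUnit B := isUnit_of_dvd_unit (dvd_pow_self B two_ne_zero) hu2
    have hdB : B.natDegree = 0 := Polynomial.natDegree_eq_zero_of_isUnit huB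
    have hdA : A.natDegree = 0 := by
      have h1 : (A ^ 2).natDegree = (Polynomial.C c * B ^ 2).natDegree := by rw [heq]
      have h2 : (A ^ 2).natDegree = 2 * A.natDegree := Polynomial.natDegree_pow A 2
      have h3 : (Polynomial.C c * B ^ 2).natDegree ≤ 0 := by
        refine le_trans (Polynomial.natDegree_mul_le) ?_
        simp [Polynomial.natDegree_pow, hdB]
      omega
    exact hr ⟨hdA, hdB⟩
  apply Set.Finite.subset (Polynomial.finite_setOf_isRoot hQ)
  rintro t ⟨⟨hBt, hDt⟩, ht⟩
  have h1 : ratFun A B t * Real.cos (ratFun C D t) = p.1 := congrArg Prod.fst ht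
  have h2 : ratFun A B t * Real.sin (ratFun C D t) = p.2 := congrArg Prod.snd ht
  have hr2 : ratFun A B t ^ 2 = c := by
    have h3 := Real.sin_sq_add_cos_sq (ratFun C D t)
    rw [hc, ← h1, ← h2]
    linear_combination (-(ratFun A B t ^ 2)) * h3
  have hA2 : A.eval t ^ 2 = c * B.eval t ^ 2 := by
    have : (A.eval t / B.eval t) ^ 2 = c := hr2
    field_simp at this
    linarith [this]
  show Q.IsRoot t
  simp only [Polynomial.IsRoot, hQdef, Polynomial.eval_sub, Polynomial.eval_mul,
    Polynomial.eval_pow, Polynomial.eval_C]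
  linarith [hA2]
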